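/- arXiv:0705.2608 — 6 statements merged into one kernel-verified Lean document; each statement's English description precedes it below -/
import Mathlib

section
/- Let p be a prime, k an algebraic closure of the field 𝔽_p with p elements, W = 𝕎(k) the ring of p-typical Witt vectors of k, and P₀ the fraction field of W. Let σ : P₀ ≃ P₀ be the field automorphism induced by the Witt-vector Frobenius automorphism of W. Let V be a finite-dimensional P₀-vector space and φ : V → V an additive σ-semilinear map (φ(c • v) = σ(c) • φ(v)). Then the kernel of 1 − φ : V → V is stable under multiplication by scalars from the fixed subfield P₀^{σ=1}, and as a vector space over this fixed field (which is isomorphic to ℚ_p) it is finite-dimensional, of dimension at most dim_{P₀} V. -/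
set_option synthInstance.maxHeartbeats 1000000
set_option maxHeartbeats 1000000


/-- The fixed subfield `{c : K | σ c = c}` of a field automorphism `σ`. -/
def RingEquiv.fixedSubfield {K : Type*} [Field K] (σ : K ≃+* K) : Subfield K where
  carrier := {c : K | σ c = c}
  mul_mem' := by
    intro a b (ha : σ a = a) (hb : σ b = b)
    simp only [Set.mem_setOf_eq, map_mul, ha, hb]
  one_mem' := map_one σ
  add_mem' := by
    intro a b (ha : σ a = a) (hb : σ b = b)
    simp only [Set.mem_setOf_eq, map_add, ha, hb]
  zero_mem' := map_zero σ
  neg_mem' := by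
    intro a (ha : σ a = a)
    simp only [Set.mem_setOf_eq, map_neg, ha]
  inv_mem' := by
    intro a (ha : σ a = a)
    simp only [Set.mem_setOf_eq, map_inv₀, ha]

section Aux

variable {P₀ V : Type*} [Field P₀] [AddCommGroup V] [Module P₀ V]

theorem fixedSubfield_smul_def (σ : P₀ ≃+* P₀) (c : σ.fixedSubfield) (v : V) :
    c • v = (c : P₀) • v := rfl

/-- Vectors fixed by a `σ`-semilinear map that are linearly independent over the
fixed subfield are linearly independent over the whole field. -/
theorem linearIndependent_of_fixed (σ : P₀ ≃+* P₀) (φ : V →+ V)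
    (hφ : ∀ (c : P₀) (v : V), φ (c • v) = σ c • φ v)
    {ι : Type*} {v : ι → V} (hv : ∀ i, φ (v i) = v i)
    (hind : LinearIndependent σ.fixedSubfield v) :
    LinearIndependent P₀ v := by
  classical
  rw [linearIndependent_iff']
  suffices H : ∀ n : ℕ, ∀ s : Finset ι, s.card ≤ n → ∀ g : ι → P₀,
      ∑ i ∈ s, g i • v i = 0 → ∀ i ∈ s, g i = 0 by
    intro s g hg i hi
    exact H s.card s le_rfl g hg i hi
  intro n
  induction n with
  | zero =>
    intro s hs g _ i hi
    rw [Finset.card_eq_zero.mp (Nat.le_zero.mp hs)] at hi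
    exact absurd hi (Finset.notMem_empty i)
  | succ n ih =>
    intro s hs g hsum
    by_contra hcon
    push_neg at hcon
    obtain ⟨i₀, hi₀, hgi₀⟩ := hcon
    set g' : ι → P₀ := fun j => (g i₀)⁻¹ * g j with hg'
    have hsum' : ∑ i ∈ s, g' i • v i = 0 := by
      have h := congrArg (fun x : V => (g i₀)⁻¹ • x) hsum
      simpa [Finset.smul_sum, smul_smul, hg'] using h
    have hg'i₀ : g' i₀ = 1 := inv_mul_cancel₀ hgi₀
    have hsum2 : ∑ i ∈ s, σ (g' i) • v i = 0 := by
      have h := congrArg φ hsum'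
      rw [map_sum, map_zero] at h
      have : ∀ i ∈ s, φ (g' i • v i) = σ (g' i) • v i := by
        intro i _
        rw [hφ, hv]
      rwa [Finset.sum_congr rfl this] at h
    have hdiff : ∑ i ∈ s.erase i₀, (g' i - σ (g' i)) • v i = 0 := by
      have h3 : ∑ i ∈ s, (g' i - σ (g' i)) • v i = 0 := by
        simp only [sub_smul]
        rw [Finset.sum_sub_distrib, hsum', hsum2, sub_zero]
      rw [← Finset.add_sum_erase s _ hi₀] at h3
      simpa [hg'i₀] using h3
    have hcard : (s.erase i₀).card ≤ n := by
      have hce := Finset.card_erase_of_mem hi₀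
      omega
    have hfix : ∀ i ∈ s, σ (g' i) = g' i := by
      intro i hi
      rcases eq_or_ne i i₀ with rfl | hne
      · rw [hg'i₀, map_one]
      · have h4 := ih (s.erase i₀) hcard _ hdiff i (Finset.mem_erase.mpr ⟨hne, hi⟩)
        exact (sub_eq_zero.mp h4).symm
    set G : ι → σ.fixedSubfield := fun i =>
      if h : i ∈ s then ⟨g' i, hfix i h⟩ else 0 with hG
    have hGsum : ∑ i ∈ s, G i • v i = 0 := by
      have : ∀ i ∈ s, G i • v i = g' i • v i := by
        intro i hi
        rw [fixedSubfield_smul_def, hG]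
        simp [dif_pos hi]
      rw [Finset.sum_congr rfl this]
      exact hsum'
    have hG0 := linearIndependent_iff'.mp hind s G hGsum i₀ hi₀
    have : g' i₀ = 0 := by
      have := congrArg (Subtype.val) hG0
      simpa [hG, dif_pos hi₀] using this
    rw [hg'i₀] at this
    exact one_ne_zero this

end Aux

/-- With `k = 𝔽̄_p`, `W = 𝕎(k)`, `P₀ = Frac W` and `σ` the automorphism of `P₀`
induced by the Witt-vector Frobenius, let `V` be a finite-dimensional
`P₀`-vector space and `φ : V → V` an additive `σ`-semilinear map.  Then the
kernel of `1 - φ` is stable under multiplication by scalars fixed by `σ`, and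
as a vector space over the fixed subfield `P₀^{σ=1}` it is finite-dimensional
of dimension at most `dim_{P₀} V`. -/
theorem ker_one_sub_frobeniusSemilinear_finiteDimensional_over_fixedField
    (p : ℕ) [Fact p.Prime]
    (P₀ : Type) [Field P₀]
    [Algebra (WittVector p (AlgebraicClosure (ZMod p))) P₀]
    [IsFractionRing (WittVector p (AlgebraicClosure (ZMod p))) P₀]
    (σ : P₀ ≃+* P₀)
    (hσ : ∀ w : WittVector p (AlgebraicClosure (ZMod p)),
      σ (algebraMap (WittVector p (AlgebraicClosure (ZMod p))) P₀ w) =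
        algebraMap (WittVector p (AlgebraicClosure (ZMod p))) P₀ (WittVector.frobenius w))
    (V : Type) [AddCommGroup V] [Module P₀ V] [FiniteDimensional P₀ V]
    (φ : V →+ V) (hφ : ∀ (c : P₀) (v : V), φ (c • v) = σ c • φ v) :
    (∀ c : P₀, σ c = c → ∀ v : V, v - φ v = 0 → (c • v) - φ (c • v) = 0) ∧
    ∃ K : Submodule σ.fixedSubfield V,
      (K : Set V) = {v : V | v - φ v = 0} ∧
      FiniteDimensional σ.fixedSubfield K ∧
      Module.finrank σ.fixedSubfield K ≤ Module.finrank P₀ V := by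
  have stab : ∀ c : P₀, σ c = c → ∀ v : V, v - φ v = 0 → (c • v) - φ (c • v) = 0 := by
    intro c hc v hv
    have hv' : φ v = v := (sub_eq_zero.mp hv).symm
    rw [hφ, hc, hv', sub_self]
  refine ⟨stab, ?_⟩
  set K : Submodule σ.fixedSubfield V :=
    { carrier := {v : V | v - φ v = 0}
      add_mem' := by
        intro a b (ha : a - φ a = 0) (hb : b - φ b = 0)
        show (a + b) - φ (a + b) = 0
        rw [map_add]
        rw [sub_eq_zero] at ha hb ⊢
        rw [← ha, ← hb]
      zero_mem' := by
        show (0 : V) - φ 0 = 0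
        rw [map_zero, sub_zero]
      smul_mem' := by
        intro c v (hv : v - φ v = 0)
        exact stab (c : P₀) c.2 v hv } with hK
  have hfixmem : ∀ x : K, φ (x : V) = (x : V) := by
    intro x
    exact (sub_eq_zero.mp x.2).symm
  have hrank : Module.rank σ.fixedSubfield K ≤ (Module.finrank P₀ V : Cardinal) := by
    apply rank_le
    intro t ht
    have ht' : LinearIndependent σ.fixedSubfield (fun i : t => ((i : K) : V)) :=
      ht.map' K.subtype K.ker_subtype
    have hindP : LinearIndependent P₀ (fun i : t => ((i : K) : V)) :=
      linearIndependent_of_fixed σ φ hφ (fun i => hfixmem _) ht'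
    have := hindP.fintype_card_le_finrank
    simpa [Fintype.card_coe] using this
  have hfd : FiniteDimensional σ.fixedSubfield K :=
    Module.rank_lt_aleph0_iff.mp (hrank.trans_lt (Cardinal.nat_lt_aleph0 _))
  exact ⟨K, rfl, hfd, Module.finrank_le_of_rank_le hrank⟩
end

section
/- Let k be an algebraically closed field of characteristic p > 0, let V be a finite-dimensional k-vector space, and let φ : V → V be an additive map that is Frobenius-semilinear, i.e. φ(c • v) = c^p • φ(v) for all c ∈ k, v ∈ V. Then the additive map 1 − φ : V → V, v ↦ v − φ(v), is surjective. -/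
open Polynomial Finset

/-- Let `k` be an algebraically closed field of characteristic `p > 0`, `V` a
finite-dimensional `k`-vector space and `φ : V → V` an additive
Frobenius-semilinear map (`φ (c • v) = c ^ p • φ v`).  Then
`1 - φ : V → V`, `v ↦ v - φ v`, is surjective. -/
theorem surjective_one_sub_frobeniusSemilinear_algClosed
    (p : ℕ) (hp : 0 < p)
    (k : Type) [Field k] [IsAlgClosed k] [CharP k p]
    (V : Type) [AddCommGroup V] [Module k V] [FiniteDimensional k V]
    (φ : V →+ V) (hφ : ∀ (c : k) (v : V), φ (c • v) = c ^ p • φ v) :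
    Function.Surjective (fun v : V => v - φ v) := by
  have hprime : p.Prime := (CharP.char_is_prime_or_zero k p).resolve_right (by omega)
  haveI : Fact p.Prime := ⟨hprime⟩
  intro w
  classical
  set u : ℕ → V := fun i => φ^[i] w with hu_def
  have hu : ∀ i, φ (u i) = u (i + 1) := fun i => (Function.iterate_succ_apply' φ i w).symm
  have hu0 : u 0 = w := rfl
  -- Step 1: some iterate lies in the span of the previous ones.
  have hex : ∃ n, ∃ a : ℕ → k, u n = ∑ i ∈ range n, a i • u i := by
    set d := Module.finrank k V with hd
    have hdep : ¬ LinearIndependent k (fun i : Fin (d + 1) => u i) := by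
      intro h
      have := h.fintype_card_le_finrank
      simp [Fintype.card_fin] at this
      omega
    obtain ⟨g, hgsum, i0, hi0⟩ := Fintype.not_linearIndependent_iff.mp hdep
    set G : ℕ → k := fun i => if h : i < d + 1 then g ⟨i, h⟩ else 0 with hG
    have hGsum : ∑ i ∈ range (d + 1), G i • u i = 0 := by
      rw [Finset.sum_range]
      simpa [G, Fin.is_le] using hgsum
    set s : Finset ℕ := (range (d + 1)).filter (fun i => G i ≠ 0) with hs
    have hsne : s.Nonempty := ⟨(i0 : ℕ), by simp [s, G, i0.isLt, hi0, Fin.is_le]⟩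
    set j := s.max' hsne with hj
    have hjmem := s.max'_mem hsne
    have hjlt : j < d + 1 := mem_range.mp (mem_filter.mp hjmem).1
    have hGj : G j ≠ 0 := (mem_filter.mp hjmem).2
    have hsum2 : ∑ i ∈ range (j + 1), G i • u i = 0 := by
      rw [← hGsum]
      apply Finset.sum_subset (range_subset_range.mpr hjlt)
      intro x hx hx2
      have hGx : G x = 0 := by
        by_contra hc
        exact hx2 (mem_range.mpr (Nat.lt_succ_of_le (s.le_max' x (mem_filter.mpr ⟨hx, hc⟩))))
      simp [hGx]
    refine ⟨j, fun i => (G j)⁻¹ * (-G i), ?_⟩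
    rw [Finset.sum_range_succ] at hsum2
    have h1 : G j • u j = ∑ i ∈ range j, (-G i) • u i := by
      have := eq_neg_of_add_eq_zero_right hsum2
      rw [this, ← Finset.sum_neg_distrib]
      simp [neg_smul]
    calc u j = (G j)⁻¹ • (G j • u j) := by
          rw [smul_smul, inv_mul_cancel₀ hGj, one_smul]
      _ = ∑ i ∈ range j, ((G j)⁻¹ * (-G i)) • u i := by
          rw [h1, Finset.smul_sum]
          simp [smul_smul]
  obtain ⟨n, a, hn⟩ := hex
  match n with
  | 0 =>
    -- then w = 0
    have hw : w = 0 := by rw [← hu0]; simpa using hn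
    exact ⟨0, by simp [hw]⟩
  | (m + 1) =>
    -- the polynomial construction
    set B : ℕ → k[X] := fun i =>
      Nat.rec (expand k p (C (a 0) * X + 1))
        (fun i Bi => Bi ^ p + expand k p (C (a (i + 1)) * X)) i with hB
    have hB0 : B 0 = expand k p (C (a 0) * X + 1) := rfl
    have hBs : ∀ i, B (i + 1) = B i ^ p + expand k p (C (a (i + 1)) * X) := fun i => rfl
    have hnd1 : ¬ (p ∣ 1) := Nat.Prime.one_lt hprime |> fun h => by
      intro hdvd; exact absurd (Nat.le_of_dvd one_pos hdvd) (by omega)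
    have hc1 : ∀ i, (B i).coeff 1 = 0 := by
      intro i
      induction i with
      | zero => rw [hB0, coeff_expand hp, if_neg hnd1]
      | succ i ih =>
        have hpow : B i ^ p = expand k p ((B i).map (frobenius k p)) := by
          rw [← map_expand, map_frobenius_expand]
        rw [hBs, coeff_add, hpow, coeff_expand hp, if_neg hnd1,
          coeff_expand hp, if_neg hnd1, add_zero]
    set P : k[X] := B m - X with hP
    have hP1 : P.coeff 1 = -1 := by
      rw [hP, coeff_sub, hc1 m, coeff_X_one, zero_sub]
    have hPdeg : P.degree ≠ 0 := by
      intro h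
      have hc : P.coeff 1 = 0 := by
        apply Polynomial.coeff_eq_zero_of_degree_lt
        rw [h]; exact_mod_cast WithBot.coe_lt_coe.mpr one_pos
      rw [hP1] at hc
      exact one_ne_zero (neg_eq_zero.mp hc)
    obtain ⟨t, ht⟩ := IsAlgClosed.exists_root P hPdeg
    set b : ℕ → k := fun i => (B i).eval t with hb
    have hb0 : b 0 = a 0 * t ^ p + 1 := by
      simp [hb, hB0, expand_eval]
    have hbs : ∀ i, b (i + 1) = b i ^ p + a (i + 1) * t ^ p := by
      intro i
      simp [hb, hBs i, expand_eval]
    have hbm : b m = t := by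
      have : P.eval t = 0 := ht
      rw [hP, eval_sub, eval_X, sub_eq_zero] at this
      exact this
    refine ⟨∑ i ∈ range (m + 1), b i • u i, ?_⟩
    show (∑ i ∈ range (m + 1), b i • u i) - φ (∑ i ∈ range (m + 1), b i • u i) = w
    have hφv : φ (∑ i ∈ range (m + 1), b i • u i)
        = (∑ i ∈ range m, (b i ^ p) • u (i + 1)) + t ^ p • u (m + 1) := by
      rw [map_sum]
      have : ∀ i ∈ range (m + 1), φ (b i • u i) = (b i ^ p) • u (i + 1) := by
        intro i _
        rw [hφ, hu]
      rw [Finset.sum_congr rfl this, Finset.sum_range_succ, hbm]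
    have htp : t ^ p • u (m + 1) = ∑ i ∈ range (m + 1), (t ^ p * a i) • u i := by
      rw [hn, Finset.smul_sum]
      simp [smul_smul]
    have key : ∑ i ∈ range (m + 1), b i • u i
        = ((∑ i ∈ range m, (b i ^ p) • u (i + 1))
            + ∑ i ∈ range (m + 1), (t ^ p * a i) • u i) + u 0 := by
      rw [Finset.sum_range_succ' (fun i => b i • u i),
        Finset.sum_range_succ' (fun i => (t ^ p * a i) • u i)]
      have h1 : ∀ i ∈ range m, b (i + 1) • u (i + 1)
          = (b i ^ p) • u (i + 1) + (t ^ p * a (i + 1)) • u (i + 1) := by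
        intro i _
        rw [hbs i, mul_comm (a (i + 1)) (t ^ p), add_smul]
      have h2 : b 0 • u 0 = (t ^ p * a 0) • u 0 + u 0 := by
        rw [hb0, mul_comm (a 0) (t ^ p), add_smul, one_smul]
      rw [Finset.sum_congr rfl h1, Finset.sum_add_distrib, h2]
      abel
    rw [hφv, htp, key, hu0]
    abel
end

section
/- Let k be an algebraically closed field of characteristic p > 0, let V be a finite-dimensional k-vector space of dimension n, and let φ : V → V be an additive Frobenius-semilinear map (φ(c • v) = c^p • φ(v)). Then the kernel of 1 − φ : V → V, v ↦ v − φ(v), is an 𝔽_p-subspace of V that is finite, of cardinality at most p^n. -/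
open Polynomial

/-- Let `k` be an algebraically closed field of characteristic `p > 0`, `V` a
finite-dimensional `k`-vector space of dimension `n`, and `φ : V → V` an
additive Frobenius-semilinear map (`φ (c • v) = c ^ p • φ v`).  Then the
kernel of `1 - φ` is an `𝔽_p`-subspace of `V` (closed under addition and
under scalar multiplication by elements of the prime field `𝔽_p ⊆ k`), is
finite, and has cardinality at most `p ^ n`. -/
theorem ker_one_sub_frobeniusSemilinear_finite_card_le
    (p : ℕ) (hp : 0 < p)
    (k : Type) [Field k] [IsAlgClosed k] [CharP k p]
    (V : Type) [AddCommGroup V] [Module k V] [FiniteDimensional k V]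
    (φ : V →+ V) (hφ : ∀ (c : k) (v : V), φ (c • v) = c ^ p • φ v) :
    (∀ v w : V, v - φ v = 0 → w - φ w = 0 → (v + w) - φ (v + w) = 0) ∧
    (∀ (c : ZMod p) (v : V), v - φ v = 0 →
      (ZMod.castHom (dvd_refl p) k c • v) - φ (ZMod.castHom (dvd_refl p) k c • v) = 0) ∧
    ({v : V | v - φ v = 0}).Finite ∧
    Nat.card {v : V | v - φ v = 0} ≤ p ^ Module.finrank k V := by
  classical
  haveI hfp : Fact p.Prime := ⟨(CharP.char_is_prime_or_zero k p).resolve_right (by omega)⟩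
  have hp1 : 1 < p := hfp.out.one_lt
  set ψ : ZMod p →+* k := ZMod.castHom (dvd_refl p) k with hψdef
  have hψpow : ∀ a : ZMod p, (ψ a) ^ p = ψ a := by
    intro a; rw [← map_pow, ZMod.pow_card]
  -- every root of `X ^ p - X` in `k` lies in the prime field
  have hroot : ∀ x : k, x ^ p = x → ∃ a : ZMod p, ψ a = x := by
    intro x hx
    set f : k[X] := X ^ p - X with hf
    have hf0 : f ≠ 0 := FiniteField.X_pow_card_sub_X_ne_zero k hp1
    have hdeg : f.natDegree = p := FiniteField.X_pow_card_sub_X_natDegree_eq k hp1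
    have hRcard : f.roots.toFinset.card ≤ p := by
      calc f.roots.toFinset.card ≤ Multiset.card f.roots := Multiset.toFinset_card_le _
        _ ≤ f.natDegree := f.card_roots'
        _ = p := hdeg
    have hI : (Finset.univ.image fun a : ZMod p => ψ a) ⊆ f.roots.toFinset := by
      intro y hy
      simp only [Finset.mem_image] at hy
      obtain ⟨a, -, rfl⟩ := hy
      simp only [Multiset.mem_toFinset, mem_roots hf0, hf, IsRoot.def, eval_sub, eval_pow,
        eval_X]
      exact (mem_roots (p := X ^ p - X) (by rw [← hf]; exact hf0)).mpr (by
        simp only [IsRoot.def, eval_sub, eval_pow, eval_X]; exact sub_eq_zero.mpr (hψpow a))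
    have hIcard : (Finset.univ.image fun a : ZMod p => ψ a).card = p := by
      rw [Finset.card_image_of_injective _ ψ.injective, Finset.card_univ, ZMod.card]
    have heq : f.roots.toFinset = Finset.univ.image fun a : ZMod p => ψ a :=
      (Finset.eq_of_subset_of_card_le hI (by omega)).symm
    have hx' : x ∈ f.roots.toFinset := by
      simp only [Multiset.mem_toFinset, mem_roots hf0, hf, IsRoot.def, eval_sub, eval_pow,
        eval_X]
      exact (mem_roots (p := X ^ p - X) (by rw [← hf]; exact hf0)).mpr (by
        simp only [IsRoot.def, eval_sub, eval_pow, eval_X]; exact sub_eq_zero.mpr hx)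
    rw [heq] at hx'
    simpa using hx'
  -- `V` as a module over the prime field
  letI instMod : Module (ZMod p) V := Module.compHom V ψ
  have hsmul : ∀ (a : ZMod p) (v : V), a • v = ψ a • v := fun _ _ => rfl
  -- the two algebraic closure properties
  have hadd : ∀ v w : V, v - φ v = 0 → w - φ w = 0 → (v + w) - φ (v + w) = 0 := by
    intro v w hv hw
    rw [sub_eq_zero] at hv hw ⊢
    rw [map_add, ← hv, ← hw]
  have hsmulmem : ∀ (c : ZMod p) (v : V), v - φ v = 0 → ψ c • v - φ (ψ c • v) = 0 := by
    intro c v hv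
    rw [sub_eq_zero] at hv ⊢
    rw [hφ, hψpow, ← hv]
  -- the fixed set as an `𝔽_p`-submodule
  let S' : Submodule (ZMod p) V :=
    { carrier := {v : V | v - φ v = 0}
      add_mem' := fun {v w} hv hw => hadd v w hv hw
      zero_mem' := by simp
      smul_mem' := fun c v hv => hsmulmem c v hv }
  -- key lemma: an `𝔽_p`-independent family of fixed vectors is `k`-independent
  have main : ∀ t : Finset V, (∀ x ∈ t, φ x = x) →
      (∀ a : V → ZMod p, ∑ x ∈ t, a x • x = 0 → ∀ x ∈ t, a x = 0) →
      ∀ f : V → k, (∑ x ∈ t, f x • x) = 0 → ∀ x ∈ t, f x = 0 := by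
    intro t
    induction t using Finset.strongInduction with
    | _ t ih =>
      intro htS hind f hsum x₀ hx₀
      by_contra hfx₀
      set g : V → k := fun x => (f x₀)⁻¹ * f x with hg
      have hg0 : ∑ x ∈ t, g x • x = 0 := by
        have : ∑ x ∈ t, g x • x = (f x₀)⁻¹ • ∑ x ∈ t, f x • x := by
          rw [Finset.smul_sum]
          exact Finset.sum_congr rfl fun x _ => mul_smul _ _ _
        rw [this, hsum, smul_zero]
      have hgx₀ : g x₀ = 1 := inv_mul_cancel₀ hfx₀
      have hφsum : ∑ x ∈ t, (g x ^ p) • x = 0 := by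
        have h1 := congrArg φ hg0
        rw [map_sum, map_zero] at h1
        rw [← h1]
        refine Finset.sum_congr rfl fun x hx => ?_
        rw [hφ, htS x hx]
      have hsub : ∑ x ∈ t, (g x ^ p - g x) • x = 0 := by
        simp only [sub_smul, Finset.sum_sub_distrib, hφsum, hg0, sub_zero]
      have hterm : (g x₀ ^ p - g x₀) • x₀ = (0 : V) := by
        rw [hgx₀]; simp
      have herase : ∑ x ∈ t.erase x₀, (g x ^ p - g x) • x = 0 :=
        (Finset.sum_erase (f := fun x => (g x ^ p - g x) • x) (a := x₀) t hterm).trans hsub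
      -- independence restricts to the erased set
      have hind' : ∀ a : V → ZMod p, ∑ x ∈ t.erase x₀, a x • x = 0 →
          ∀ x ∈ t.erase x₀, a x = 0 := by
        intro a ha x hx
        set a' : V → ZMod p := fun y => if y ∈ t.erase x₀ then a y else 0 with ha'
        have hsum' : ∑ y ∈ t, a' y • y = 0 := by
          rw [← Finset.sum_subset (Finset.erase_subset x₀ t)
            (fun y _ hy => by simp only [ha', if_neg hy, zero_smul])]
          rw [← ha]
          exact Finset.sum_congr rfl fun y hy => by simp only [ha', if_pos hy]
        have h3 := hind a' hsum' x (Finset.mem_of_mem_erase hx)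
        rw [ha'] at h3
        simp only [if_pos hx] at h3
        exact h3
      have hpow : ∀ x ∈ t, g x ^ p = g x := by
        intro x hx
        rcases eq_or_ne x x₀ with rfl | hne
        · rw [hgx₀, one_pow]
        · have h2 := ih (t.erase x₀) (Finset.erase_ssubset hx₀)
            (fun y hy => htS y (Finset.mem_of_mem_erase hy)) hind'
            (fun y => g y ^ p - g y) herase x (Finset.mem_erase.mpr ⟨hne, hx⟩)
          exact sub_eq_zero.mp h2
      have hex : ∀ x : V, ∃ a : ZMod p, x ∈ t → ψ a = g x := by
        intro x
        by_cases hx : x ∈ t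
        · obtain ⟨a, ha⟩ := hroot (g x) (hpow x hx); exact ⟨a, fun _ => ha⟩
        · exact ⟨0, fun h => absurd h hx⟩
      choose b hb using hex
      have hsum0 : ∑ x ∈ t, b x • x = 0 := by
        have : ∀ x ∈ t, b x • x = g x • x := fun x hx => by rw [hsmul, hb x hx]
        rw [Finset.sum_congr rfl this]; exact hg0
      have hb0 := hind b hsum0 x₀ hx₀
      have : g x₀ = 0 := by rw [← hb x₀ hx₀, hb0, map_zero]
      rw [hgx₀] at this
      exact one_ne_zero this
  -- rank bound for the submodule
  have hrank : Module.rank (ZMod p) ↥S' ≤ (Module.finrank k V : Cardinal) := by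
    apply rank_le
    intro s hs
    set t : Finset V := s.image (fun y : ↥S' => (y : V)) with ht
    have hcard : t.card = s.card :=
      Finset.card_image_of_injective s Subtype.val_injective
    have htS : ∀ x ∈ t, φ x = x := by
      intro x hx
      rw [ht, Finset.mem_image] at hx
      obtain ⟨y, -, rfl⟩ := hx
      have hy2 : (y : V) - φ (y : V) = 0 := y.2
      exact (sub_eq_zero.mp hy2).symm
    have htind : ∀ a : V → ZMod p, ∑ x ∈ t, a x • x = 0 → ∀ x ∈ t, a x = 0 := by
      intro a hsum x hx
      have hsum2 : ∑ y ∈ s, a (y : V) • (y : ↥S') = 0 := by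
        apply Subtype.ext
        push_cast
        rw [← hsum, ht, Finset.sum_image (fun y _ z _ h => Subtype.val_injective h)]
      rw [ht, Finset.mem_image] at hx
      obtain ⟨y, hy, rfl⟩ := hx
      have hli := Fintype.linearIndependent_iff.mp hs (fun i : ↥s => a ((i : ↥S') : V))
      have hsum3 : ∑ i : ↥s, a ((i : ↥S') : V) • (i : ↥S') = 0 := by
        rw [Finset.univ_eq_attach, Finset.sum_attach s (fun y : ↥S' => a (y : V) • y)]
        exact hsum2
      exact hli hsum3 ⟨y, hy⟩
    have hkind : LinearIndependent k (fun x : ↥t => (x : V)) := by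
      rw [Fintype.linearIndependent_iff]
      intro g hg
      set f : V → k := fun x => if h : x ∈ t then g ⟨x, h⟩ else 0 with hfdef
      have hsumf : ∑ x ∈ t, f x • x = 0 := by
        rw [← hg, Finset.univ_eq_attach, ← Finset.sum_attach t (fun x => f x • x)]
        exact Finset.sum_congr rfl fun i _ => by simp [hfdef, i.2]
      intro i
      have := main t htS htind f hsumf (i : V) i.2
      simpa [hfdef, i.2] using this
    calc s.card = t.card := hcard.symm
      _ ≤ Module.finrank k V := hkind.finset_card_le_finrank
  haveI hfd : Module.Finite (ZMod p) ↥S' :=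
    Module.rank_lt_aleph0_iff.mp (lt_of_le_of_lt hrank (Cardinal.nat_lt_aleph0 _))
  have hfrk : Module.finrank (ZMod p) ↥S' ≤ Module.finrank k V :=
    Module.finrank_le_of_rank_le hrank
  haveI hfinS' : Finite ↥S' := Module.finite_of_finite (ZMod p)
  haveI : Fintype ↥S' := Fintype.ofFinite _
  have hcardS' : Nat.card ↥S' ≤ p ^ Module.finrank k V := by
    rw [Nat.card_eq_fintype_card, Module.card_eq_pow_finrank (K := ZMod p) (V := ↥S'), ZMod.card]
    exact Nat.pow_le_pow_right hp hfrk
  have hequiv : {v : V | v - φ v = 0} ≃ ↥S' := Equiv.subtypeEquivRight fun v => Iff.rfl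
  refine ⟨hadd, hsmulmem, ?_, ?_⟩
  · haveI : Finite {v : V | v - φ v = 0} := Finite.of_equiv _ hequiv.symm
    exact Set.toFinite _
  · rw [Nat.card_congr hequiv]
    exact hcardS'
end

section
/- Let Λ = ℤ_p[[T]] be the ring of formal power series over the p-adic integers, and let 𝔭 = (p) be the ideal of Λ generated by p, which is a prime ideal of height one (the quotient Λ/(p) is isomorphic to the domain 𝔽_p[[T]]). For a finitely generated torsion Λ-module M, the localization M_𝔭 of M at the prime ideal 𝔭 is zero if and only if M is finitely generated as a ℤ_p-module. (Equivalently: the μ-invariant μ(M), defined as the length of M_𝔭 over the localized ring Λ_𝔭, vanishes if and only if M is a finitely generated ℤ_p-module.) -/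
open PowerSeries Filter Finset

namespace MuInvariantAux

variable {p : ℕ} [Fact p.Prime]

local notation "Λ" => PowerSeries ℤ_[p]

lemma norm_pk_mul_le (c : ℕ → ℤ_[p]) (k : ℕ) :
    ‖(p : ℤ_[p]) ^ k * c k‖ ≤ ((p : ℝ)⁻¹) ^ k := by
  calc ‖(p : ℤ_[p]) ^ k * c k‖ ≤ ‖(p : ℤ_[p]) ^ k‖ * ‖c k‖ := norm_mul_le _ _
    _ ≤ ‖(p : ℤ_[p]) ^ k‖ * 1 := by
        gcongr
        exact PadicInt.norm_le_one _
    _ = ((p : ℝ)⁻¹) ^ k := by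
        rw [mul_one, PadicInt.norm_p_pow, zpow_neg, zpow_natCast, inv_pow]

lemma one_lt_p_real : (1 : ℝ) < (p : ℝ) := by
  exact_mod_cast (Fact.out : p.Prime).one_lt

lemma summable_aux (c : ℕ → ℤ_[p]) :
    Summable (fun k => (p : ℤ_[p]) ^ k * c k) := by
  refine Summable.of_norm_bounded (g := fun k => ((p : ℝ)⁻¹) ^ k)
    (summable_geometric_of_lt_one (by positivity) (inv_lt_one_of_one_lt₀ one_lt_p_real))
    (norm_pk_mul_le c)

lemma tendsto_pk_zero (c : ℕ → ℤ_[p]) :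
    Tendsto (fun K => (p : ℤ_[p]) ^ K * c K) atTop (nhds 0) := by
  refine squeeze_zero_norm (norm_pk_mul_le c) ?_
  exact tendsto_pow_atTop_nhds_zero_of_lt_one (by positivity) (inv_lt_one_of_one_lt₀ one_lt_p_real)

/-- Weierstrass division for `ℤ_p⟦X⟧`. -/
theorem division (s : Λ) (n : ℕ) (hu : IsUnit ((coeff (R := ℤ_[p]) n) s))
    (hlow : ∀ i < n, (p : ℤ_[p]) ∣ (coeff (R := ℤ_[p]) i) s) (f : Λ) :
    ∃ q r : Λ, (∀ i, n ≤ i → (coeff (R := ℤ_[p]) i) r = 0) ∧ f = q * s + r := by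
  classical
  -- the shift-by-n operator
  set shf : Λ → Λ := fun g => PowerSeries.mk fun i => (coeff (R := ℤ_[p]) (n + i)) g with hshf
  have hdecomp : ∀ g : Λ, g = ((trunc n g : Polynomial ℤ_[p]) : Λ) + X ^ n * shf g := by
    intro g
    ext i
    rw [map_add, Polynomial.coeff_coe, coeff_trunc, coeff_X_pow_mul']
    by_cases h : i < n
    · rw [if_pos h, if_neg (by omega)]
      ring
    · rw [if_neg h, if_pos (by omega), hshf, coeff_mk]
      rw [Nat.add_sub_cancel' (by omega)]
      ring
  -- the unit part
  set U : Λ := shf s with hUdef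
  have hUunit : IsUnit U := by
    rw [PowerSeries.isUnit_iff_constantCoeff]
    rwa [← coeff_zero_eq_constantCoeff, hUdef, hshf, coeff_mk, Nat.add_zero]
  obtain ⟨u, hu'⟩ := hUunit
  set V : Λ := ↑u⁻¹ with hVdef
  have hUV : U * V = 1 := by rw [← hu', hVdef, Units.mul_inv]
  -- the low part, divided by p
  set P' : Λ := PowerSeries.mk fun i => if h : i < n then (hlow i h).choose else 0 with hP'def
  have hs : s = C (R := ℤ_[p]) (p : ℤ_[p]) * P' + X ^ n * U := by
    ext i
    rw [map_add, coeff_C_mul, coeff_X_pow_mul', hP'def, coeff_mk]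
    by_cases h : i < n
    · rw [dif_pos h, if_neg (by omega)]
      rw [add_zero]
      exact (hlow i h).choose_spec
    · rw [dif_neg h, if_pos (by omega), hUdef, hshf, coeff_mk,
        Nat.add_sub_cancel' (by omega)]
      ring
  -- one division step
  have step : ∀ g : Λ, g = ((trunc n g : Polynomial ℤ_[p]) : Λ)
      + (V * shf g) * s + C (R := ℤ_[p]) (p : ℤ_[p]) * (-(P' * V * shf g)) := by
    intro g
    have h1 := hdecomp g
    linear_combination h1 - (V * shf g) * hs - (X ^ n * shf g) * hUV
  -- the iterated remainders
  set F : ℕ → Λ := fun k => (fun g => -(P' * V * shf g))^[k] f with hFdef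
  have hF : ∀ k, F (k + 1) = -(P' * V * shf (F k)) := by
    intro k
    rw [hFdef]
    exact Function.iterate_succ_apply' _ k f
  have stepF : ∀ k, F k = ((trunc n (F k) : Polynomial ℤ_[p]) : Λ)
      + (V * shf (F k)) * s + C (R := ℤ_[p]) (p : ℤ_[p]) * F (k + 1) := by
    intro k
    rw [hF k]
    exact step (F k)
  -- partial sums identity
  have partial_id : ∀ K : ℕ, f =
      (∑ k ∈ range K, C (R := ℤ_[p]) ((p : ℤ_[p]) ^ k) * ((trunc n (F k) : Polynomial ℤ_[p]) : Λ))
      + (∑ k ∈ range K, C (R := ℤ_[p]) ((p : ℤ_[p]) ^ k) * (V * shf (F k))) * s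
      + C (R := ℤ_[p]) ((p : ℤ_[p]) ^ K) * F K := by
    intro K
    induction K with
    | zero => simp [hFdef]
    | succ K ih =>
      rw [Finset.sum_range_succ, Finset.sum_range_succ]
      have hCp : (C (R := ℤ_[p])) ((p : ℤ_[p]) ^ (K + 1))
          = C (R := ℤ_[p]) ((p : ℤ_[p]) ^ K) * C (R := ℤ_[p]) (p : ℤ_[p]) := by
        rw [← map_mul, pow_succ]
      linear_combination ih + C (R := ℤ_[p]) ((p : ℤ_[p]) ^ K) * stepF K - F (K + 1) * hCp
  -- the limits
  set Rl : Λ := PowerSeries.mk fun i =>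
    ∑' k, (p : ℤ_[p]) ^ k * (coeff (R := ℤ_[p]) i) ((trunc n (F k) : Polynomial ℤ_[p]) : Λ) with hRl
  set Ql : Λ := PowerSeries.mk fun i =>
    ∑' k, (p : ℤ_[p]) ^ k * (coeff (R := ℤ_[p]) i) (V * shf (F k)) with hQl
  refine ⟨Ql, Rl, ?_, ?_⟩
  · intro i hi
    rw [hRl, coeff_mk]
    have : ∀ k : ℕ, (p : ℤ_[p]) ^ k * (coeff (R := ℤ_[p]) i) ((trunc n (F k) : Polynomial ℤ_[p]) : Λ)
        = 0 := by
      intro k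
      rw [Polynomial.coeff_coe, coeff_trunc, if_neg (by omega), mul_zero]
    simp only [this]
    exact tsum_zero
  · -- f = Ql * s + Rl, coefficientwise by taking limits
    ext i
    have hA : Tendsto (fun K => ∑ k ∈ range K,
        (p : ℤ_[p]) ^ k * (coeff (R := ℤ_[p]) i) ((trunc n (F k) : Polynomial ℤ_[p]) : Λ))
        atTop (nhds ((coeff (R := ℤ_[p]) i) Rl)) := by
      rw [hRl, coeff_mk]
      exact (summable_aux _).hasSum.tendsto_sum_nat
    have hB : Tendsto (fun K => (coeff (R := ℤ_[p]) i)
        ((∑ k ∈ range K, C (R := ℤ_[p]) ((p : ℤ_[p]) ^ k) * (V * shf (F k))) * s))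
        atTop (nhds ((coeff (R := ℤ_[p]) i) (Ql * s))) := by
      simp only [coeff_mul]
      refine tendsto_finset_sum _ (fun x _ => ?_)
      have hcoe : ∀ K : ℕ, (coeff (R := ℤ_[p]) x.1)
          (∑ k ∈ range K, C (R := ℤ_[p]) ((p : ℤ_[p]) ^ k) * (V * shf (F k)))
          = ∑ k ∈ range K, (p : ℤ_[p]) ^ k * (coeff (R := ℤ_[p]) x.1) (V * shf (F k)) := by
        intro K
        rw [map_sum]
        exact Finset.sum_congr rfl fun k _ => coeff_C_mul _ _ _
      simp only [hcoe]
      have : Tendsto (fun K => ∑ k ∈ range K,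
          (p : ℤ_[p]) ^ k * (coeff (R := ℤ_[p]) x.1) (V * shf (F k)))
          atTop (nhds ((coeff (R := ℤ_[p]) x.1) Ql)) := by
        rw [hQl, coeff_mk]
        exact (summable_aux _).hasSum.tendsto_sum_nat
      exact this.mul_const _
    have hC : Tendsto (fun K => (p : ℤ_[p]) ^ K * (coeff (R := ℤ_[p]) i) (F K))
        atTop (nhds 0) := tendsto_pk_zero _
    have heq : (fun _ : ℕ => (coeff (R := ℤ_[p]) i) f) = fun K =>
        (∑ k ∈ range K,
          (p : ℤ_[p]) ^ k * (coeff (R := ℤ_[p]) i) ((trunc n (F k) : Polynomial ℤ_[p]) : Λ))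
        + (coeff (R := ℤ_[p]) i)
          ((∑ k ∈ range K, C (R := ℤ_[p]) ((p : ℤ_[p]) ^ k) * (V * shf (F k))) * s)
        + (p : ℤ_[p]) ^ K * (coeff (R := ℤ_[p]) i) (F K) := by
      funext K
      conv_lhs => rw [partial_id K]
      rw [map_add, map_add, coeff_C_mul, map_sum]
      congr 1
      congr 1
      exact Finset.sum_congr rfl fun k _ => coeff_C_mul _ _ _
    have hlim : Tendsto (fun _ : ℕ => (coeff (R := ℤ_[p]) i) f) atTop
        (nhds ((coeff (R := ℤ_[p]) i) Rl + (coeff (R := ℤ_[p]) i) (Ql * s) + 0)) := by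
      rw [heq]
      exact (hA.add hB).add hC
    have := tendsto_nhds_unique tendsto_const_nhds hlim
    rw [this, map_add]
    ring

end MuInvariantAux

open MuInvariantAux PowerSeries in
/-- Let `Λ = ℤ_p[[T]]` and let `𝔭 = (p)` be the (height-one prime) ideal of `Λ`
generated by `p`.  For a finitely generated torsion `Λ`-module `M`, the
localization `M_𝔭` of `M` at `𝔭` is zero if and only if `M` is finitely
generated as a `ℤ_p`-module (i.e. the `μ`-invariant of `M` vanishes iff `M`
is a finitely generated `ℤ_p`-module). -/
theorem localization_at_p_eq_zero_iff_finite_over_Zp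
    (p : ℕ) [Fact p.Prime]
    (P : Ideal (PowerSeries ℤ_[p])) (hP : P = Ideal.span {(p : PowerSeries ℤ_[p])})
    [P.IsPrime]
    (M : Type) [AddCommGroup M] [Module (PowerSeries ℤ_[p]) M]
    [Module ℤ_[p] M] [IsScalarTower ℤ_[p] (PowerSeries ℤ_[p]) M]
    (hfin : Module.Finite (PowerSeries ℤ_[p]) M)
    (htors : Module.IsTorsion (PowerSeries ℤ_[p]) M) :
    Subsingleton (LocalizedModule P.primeCompl M) ↔ Module.Finite ℤ_[p] M := by
  classical
  subst hP
  have hCsmul : ∀ (a : ℤ_[p]) (m : M), (C (R := ℤ_[p]) a) • m = a • m := by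
    intro a m
    have h : (C (R := ℤ_[p]) a : PowerSeries ℤ_[p]) = algebraMap ℤ_[p] (PowerSeries ℤ_[p]) a := by
      simp [PowerSeries.algebraMap_apply]
    rw [h, algebraMap_smul]
  have hpnu : ¬ IsUnit ((p : ℕ) : ℤ_[p]) := by
    intro h
    have hmem : ((p : ℕ) : ℤ_[p]) ∈ IsLocalRing.maximalIdeal ℤ_[p] := by
      rw [PadicInt.maximalIdeal_eq_span_p]
      exact Ideal.mem_span_singleton_self _
    exact IsLocalRing.mem_maximalIdeal _ |>.mp hmem h
  constructor
  · -- localization zero → finite over ℤ_p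
    intro hsub
    obtain ⟨S, hS⟩ := hfin.fg_top
    -- a single annihilator outside (p)
    have hkill : ∀ x : M, ∃ s : (Ideal.span {((p:ℕ) : PowerSeries ℤ_[p])}).primeCompl, (s : PowerSeries ℤ_[p]) • x = 0 := by
      intro x
      have h0 : (LocalizedModule.mk x 1 : LocalizedModule (Ideal.span {((p:ℕ) : PowerSeries ℤ_[p])}).primeCompl M)
          = LocalizedModule.mk 0 1 := Subsingleton.elim _ _
      rw [LocalizedModule.mk_eq] at h0
      obtain ⟨u, hu⟩ := h0
      refine ⟨u, ?_⟩
      rw [one_smul, one_smul, smul_zero] at hu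
      rw [Submonoid.smul_def] at hu
      exact hu
    choose σ hσ using hkill
    set sU : (Ideal.span {((p:ℕ) : PowerSeries ℤ_[p])}).primeCompl := ∏ x ∈ S, σ x with hsU
    set s : PowerSeries ℤ_[p] := (sU : PowerSeries ℤ_[p]) with hsdef
    have hskill : ∀ x ∈ S, s • x = 0 := by
      intro x hx
      have hprod : sU = σ x * ∏ y ∈ S.erase x, σ y := (Finset.mul_prod_erase S σ hx).symm
      rw [hsdef, hprod]
      push_cast
      rw [mul_comm, mul_smul, hσ x, smul_zero]
    have hsP : s ∉ Ideal.span {((p : ℕ) : PowerSeries ℤ_[p])} := sU.2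
    -- least coefficient not divisible by p
    have hex : ∃ i, ¬ ((p : ℕ) : ℤ_[p]) ∣ (coeff (R := ℤ_[p]) i) s := by
      by_contra hall
      push_neg at hall
      apply hsP
      rw [Ideal.mem_span_singleton]
      refine ⟨PowerSeries.mk fun i => (hall i).choose, ?_⟩
      ext i
      have hnat : ((p : ℕ) : PowerSeries ℤ_[p]) = C (R := ℤ_[p]) ((p : ℕ) : ℤ_[p]) := by
        push_cast
        rfl
      rw [hnat, coeff_C_mul, coeff_mk]
      exact (hall i).choose_spec
    set n : ℕ := Nat.find hex with hndef
    have hn : ¬ ((p : ℕ) : ℤ_[p]) ∣ (coeff (R := ℤ_[p]) n) s := Nat.find_spec hex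
    have hlow : ∀ i < n, ((p : ℕ) : ℤ_[p]) ∣ (coeff (R := ℤ_[p]) i) s := by
      intro i hi
      have := Nat.find_min hex hi
      simpa [not_not] using this
    have hu : IsUnit ((coeff (R := ℤ_[p]) n) s) := by
      by_contra hnu
      apply hn
      have hmem : (coeff (R := ℤ_[p]) n) s ∈ IsLocalRing.maximalIdeal ℤ_[p] :=
        IsLocalRing.mem_maximalIdeal _ |>.mpr hnu
      rwa [PadicInt.maximalIdeal_eq_span_p, Ideal.mem_span_singleton] at hmem
    -- the finite generating set over ℤ_p
    set T : Finset M := ((Finset.range n) ×ˢ S).image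
      (fun ij => ((X : PowerSeries ℤ_[p]) ^ ij.1) • ij.2) with hT
    set V : Submodule ℤ_[p] M := Submodule.span ℤ_[p] (T : Set M) with hV
    have key : ∀ f : PowerSeries ℤ_[p], ∀ x ∈ S, f • x ∈ V := by
      intro f x hx
      obtain ⟨q, r, hr, hfq⟩ := division s n hu hlow f
      have h1 : f • x = r • x := by
        rw [hfq, add_smul, mul_smul, hskill x hx, smul_zero, zero_add]
      have hrsum : r = ∑ i ∈ Finset.range n, C (R := ℤ_[p]) ((coeff (R := ℤ_[p]) i) r) * X ^ i := by
        ext j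
        rw [map_sum]
        by_cases hj : j < n
        · rw [Finset.sum_eq_single j (fun i _ hij => by
            rw [coeff_C_mul, PowerSeries.coeff_X_pow, if_neg (fun h => hij h.symm), mul_zero])
            (fun h => absurd (Finset.mem_range.mpr hj) h)]
          rw [coeff_C_mul, PowerSeries.coeff_X_pow, if_pos rfl, mul_one]
        · rw [hr j (by omega), Finset.sum_eq_zero]
          intro i hi
          rw [coeff_C_mul, PowerSeries.coeff_X_pow,
            if_neg (by rw [Finset.mem_range] at hi; omega), mul_zero]
      rw [h1, hrsum, Finset.sum_smul]
      refine Submodule.sum_mem _ (fun i hi => ?_)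
      rw [mul_smul, hCsmul]
      refine Submodule.smul_mem _ _ (Submodule.subset_span ?_)
      rw [hT]
      exact Finset.mem_coe.mpr (Finset.mem_image.mpr
        ⟨(i, x), Finset.mem_product.mpr ⟨hi, hx⟩, rfl⟩)
    -- V is in fact a Λ-submodule
    have hVsmul : ∀ (f : PowerSeries ℤ_[p]) (m : M), m ∈ V → f • m ∈ V := by
      intro f m hm
      induction hm using Submodule.span_induction with
      | mem y hy =>
        rw [hT] at hy
        obtain ⟨ij, hij, rfl⟩ := Finset.mem_image.mp (Finset.mem_coe.mp hy)
        rw [← mul_smul]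
        exact key _ _ (Finset.mem_product.mp hij).2
      | zero => rw [smul_zero]; exact Submodule.zero_mem _
      | add y z _ _ hy hz => rw [smul_add]; exact Submodule.add_mem _ hy hz
      | smul a y _ hy =>
        rw [smul_comm]
        exact Submodule.smul_mem _ _ hy
    have hspan : ∀ m : M, m ∈ Submodule.span (PowerSeries ℤ_[p]) (S : Set M) → m ∈ V := by
      intro m hmS
      induction hmS using Submodule.span_induction with
      | mem y hy => simpa using key 1 y hy
      | zero => exact Submodule.zero_mem _
      | add y z _ _ hy hz => exact Submodule.add_mem _ hy hz
      | smul a y _ hy => exact hVsmul a y hy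
    have hVtop : V = ⊤ := by
      rw [eq_top_iff]
      intro m _
      exact hspan m (by rw [hS]; trivial)
    exact ⟨⟨T, by rw [← hV, hVtop]⟩⟩
  · -- finite over ℤ_p → localization zero
    intro hMfin
    haveI := hMfin
    haveI : SMulCommClass (PowerSeries ℤ_[p]) ℤ_[p] M := SMulCommClass.symm _ _ _
    set A : PowerSeries ℤ_[p] →ₐ[ℤ_[p]] Module.End ℤ_[p] M :=
      Algebra.lsmul ℤ_[p] ℤ_[p] M with hA
    obtain ⟨q, hqmonic, hq0⟩ :=
      LinearMap.exists_monic_and_aeval_eq_zero (R := ℤ_[p]) (M := M) (A (X : PowerSeries ℤ_[p]))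
    set sq : PowerSeries ℤ_[p] := Polynomial.aeval (X : PowerSeries ℤ_[p]) q with hsq
    have hAs : A sq = 0 := by
      rw [hsq, ← Polynomial.aeval_algHom_apply, hq0]
    have hkill : ∀ m : M, sq • m = 0 := by
      intro m
      have : (A sq) m = 0 := by rw [hAs]; rfl
      exact this
    have hcoeffd : (coeff (R := ℤ_[p]) q.natDegree) sq = 1 := by
      rw [hsq, Polynomial.aeval_eq_sum_range, map_sum]
      rw [Finset.sum_eq_single q.natDegree]
      · rw [map_smul, PowerSeries.coeff_X_pow, if_pos rfl, smul_eq_mul, mul_one]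
        exact hqmonic
      · intro i _ hij
        rw [map_smul, PowerSeries.coeff_X_pow, if_neg (fun h => hij h.symm), smul_eq_mul,
          mul_zero]
      · intro h
        exact absurd (Finset.mem_range.mpr (Nat.lt_succ_self _)) h
    have hsnotin : sq ∈ (Ideal.span {((p:ℕ) : PowerSeries ℤ_[p])}).primeCompl := by
      intro hmem
      have hmem' : sq ∈ Ideal.span {((p:ℕ) : PowerSeries ℤ_[p])} := hmem
      rw [Ideal.mem_span_singleton] at hmem'
      obtain ⟨t, ht⟩ := hmem'
      apply hpnu
      have hnat : ((p : ℕ) : PowerSeries ℤ_[p]) = C (R := ℤ_[p]) ((p : ℕ) : ℤ_[p]) := by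
        push_cast
        rfl
      have : (1 : ℤ_[p]) = ((p : ℕ) : ℤ_[p]) * (coeff (R := ℤ_[p]) q.natDegree) t := by
        rw [← hcoeffd, ht, hnat, coeff_C_mul]
      exact IsUnit.of_mul_eq_one _ this.symm
    constructor
    intro a b
    induction a, b using LocalizedModule.induction_on₂ with
    | _ m m' t t' =>
      rw [LocalizedModule.mk_eq]
      refine ⟨⟨sq, hsnotin⟩, ?_⟩
      show sq • (t' • m) = sq • (t • m')
      rw [hkill, hkill]
end

section
/- Let d ≥ 1 and let Λ = ℤ_p[[T₁, …, T_d]] be the ring of formal power series in d variables over the p-adic integers (the Iwasawa algebra of the abelian p-adic Lie group ℤ_p^d), equipped with its natural (product) topology, for which it is a topological ring. Let X be a compact Hausdorff topological abelian group equipped with a continuous Λ-module structure. If the quotient X/(T₁, …, T_d)X of X by the closed submodule generated by T₁X, …, T_dX (the coinvariant quotient, corresponding to the coinvariants X_H for H = ℤ_p^d) is a finitely generated ℤ_p-module, then X is a finitely generated Λ-module. -/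
open Filter Set MvPowerSeries

/-- The natural (product) topology on multivariate power series: `MvPowerSeries σ R`
is `(σ →₀ ℕ) → R`, topologized with the product topology. -/
noncomputable instance mvPowerSeriesPiTopology (σ R : Type*) [TopologicalSpace R] :
    TopologicalSpace (MvPowerSeries σ R) :=
  Pi.topologicalSpace (ι := σ →₀ ℕ) (Y := fun _ => R)

instance mvPowerSeriesPiCompact (σ R : Type*) [TopologicalSpace R] [CompactSpace R] :
    CompactSpace (MvPowerSeries σ R) := Pi.compactSpace

/-- Small sums: an `n`-fold sum of sufficiently small elements lies in a
given neighbourhood of `0`. -/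
lemma aux_sum_small {X : Type*} [AddCommGroup X] [TopologicalSpace X] [IsTopologicalAddGroup X]
    (n : ℕ) : ∀ {W : Set X}, W ∈ nhds (0 : X) →
    ∃ V ∈ nhds (0 : X), ∀ a : Fin n → X, (∀ i, a i ∈ V) → ∑ i, a i ∈ W := by
  induction n with
  | zero =>
    intro W hW
    exact ⟨W, hW, fun a _ => by simpa using mem_of_mem_nhds hW⟩
  | succ n ih =>
    intro W hW
    obtain ⟨H, hH, hadd⟩ := exists_nhds_zero_half hW
    obtain ⟨V, hV, hsum⟩ := ih hH
    refine ⟨V ∩ H, Filter.inter_mem hV hH, fun a ha => ?_⟩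
    rw [Fin.sum_univ_succ]
    exact hadd _ (ha 0).2 _ (hsum (fun i => a i.succ) fun i => (ha i.succ).1)

/-- `X i ^ k → 0` in the product topology on power series. -/
lemma aux_X_pow_tendsto {σ : Type*} [DecidableEq σ] (R : Type*) [CommSemiring R]
    [TopologicalSpace R] (i : σ) :
    Tendsto (fun k : ℕ => (MvPowerSeries.X i ^ k : MvPowerSeries σ R)) atTop (nhds 0) := by
  refine tendsto_pi_nhds.mpr ?_
  intro b
  have h : ∀ᶠ k : ℕ in atTop, (MvPowerSeries.X i ^ k : MvPowerSeries σ R) b = 0 := by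
    filter_upwards [eventually_gt_atTop (b i)] with k hk
    have : (MvPowerSeries.coeff b) (MvPowerSeries.X i ^ k : MvPowerSeries σ R) = 0 := by
      rw [MvPowerSeries.X_pow_eq, MvPowerSeries.coeff_monomial, if_neg]
      intro h
      have := congrArg (fun f => f i) h
      simp [Finsupp.single_apply] at this
      omega
    simpa [MvPowerSeries.coeff_apply] using this
  exact Tendsto.congr' (h.mono fun k hk => hk.symm) (by exact tendsto_const_nhds)

/-- The span of a finite family is closed when the scalars are compact and the
module is compact Hausdorff. -/
lemma aux_span_closed {R X : Type*} [CommRing R] [TopologicalSpace R] [CompactSpace R]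
    [AddCommGroup X] [Module R X] [TopologicalSpace X] [T2Space X] [IsTopologicalAddGroup X]
    [ContinuousSMul R X] {ι : Type*} [Fintype ι] (v : ι → X) :
    IsClosed ((Submodule.span R (Set.range v) : Submodule R X) : Set X) := by
  have hrange := Fintype.range_linearCombination R v
  have hcont : Continuous fun f : ι → R => (Fintype.linearCombination R v) f := by
    simp only [Fintype.linearCombination_apply]
    exact continuous_finset_sum _ fun i _ => (continuous_apply i).smul continuous_const
  have hcomp : IsCompact (Set.range (Fintype.linearCombination R v)) := by
    rw [← Set.image_univ]
    exact isCompact_univ.image hcont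
  have h2 : (Submodule.span R (Set.range v) : Set X)
      = Set.range (Fintype.linearCombination R v) := by
    rw [← hrange]; rfl
  rw [h2]
  exact hcomp.isClosed

/-- The linear map `(w i) ↦ ∑ i, Xᵢ^m • w i`. -/
noncomputable def gmap (d : ℕ) (p : ℕ) [Fact p.Prime] (X : Type) [AddCommGroup X]
    [Module (MvPowerSeries (Fin d) ℤ_[p]) X] (m : ℕ) :
    (Fin d → X) →ₗ[MvPowerSeries (Fin d) ℤ_[p]] X :=
  ∑ i : Fin d, (LinearMap.lsmul (MvPowerSeries (Fin d) ℤ_[p]) X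
      (MvPowerSeries.X i ^ m)).comp (LinearMap.proj i)

section
variable {p : ℕ} [Fact p.Prime] {d : ℕ}
variable {X : Type} [AddCommGroup X] [Module (MvPowerSeries (Fin d) ℤ_[p]) X]

lemma gmap_apply (m : ℕ) (w : Fin d → X) :
    gmap d p X m w = ∑ i : Fin d, (MvPowerSeries.X i ^ m : MvPowerSeries (Fin d) ℤ_[p]) • w i := by
  simp [gmap]

lemma gmap_single (m : ℕ) (i : Fin d) (v : X) :
    gmap d p X m (Pi.single i v) = (MvPowerSeries.X i ^ m : MvPowerSeries (Fin d) ℤ_[p]) • v := by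
  rw [gmap_apply, Finset.sum_eq_single i]
  · simp
  · intro j _ hj; simp [Pi.single_apply, hj]
  · simp

/-- Monomials of total degree `n`. -/
def Mset (d : ℕ) (p : ℕ) [Fact p.Prime] (n : ℕ) : Set (MvPowerSeries (Fin d) ℤ_[p]) :=
  {μ | ∃ b : Fin d →₀ ℕ, (∑ i, b i) = n ∧ μ = MvPowerSeries.monomial b 1}

lemma pow_le_span_monomials (n : ℕ) :
    (Ideal.span (Set.range (MvPowerSeries.X : Fin d → MvPowerSeries (Fin d) ℤ_[p]))) ^ n
      ≤ Ideal.span (Mset d p n) := by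
  induction n with
  | zero =>
    rw [pow_zero, Ideal.one_eq_top]
    have h1 : (1 : MvPowerSeries (Fin d) ℤ_[p]) ∈ Ideal.span (Mset d p 0) := by
      apply Ideal.subset_span
      exact ⟨0, by simp, by simp⟩
    exact le_of_eq ((Ideal.eq_top_iff_one (Ideal.span (Mset d p 0))).mpr h1).symm
  | succ n ih =>
    rw [pow_succ]
    calc (Ideal.span (Set.range (MvPowerSeries.X : Fin d → MvPowerSeries (Fin d) ℤ_[p]))) ^ n *
          Ideal.span (Set.range (MvPowerSeries.X : Fin d → MvPowerSeries (Fin d) ℤ_[p]))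
        ≤ Ideal.span (Mset d p n) *
          Ideal.span (Set.range (MvPowerSeries.X : Fin d → MvPowerSeries (Fin d) ℤ_[p])) :=
          Ideal.mul_mono ih le_rfl
      _ ≤ Ideal.span (Mset d p (n + 1)) := by
          rw [Ideal.span_mul_span, Ideal.span_le]
          rintro μ hμ
          simp only [Set.mem_mul] at hμ
          obtain ⟨s, hs, t, ht, hst⟩ := hμ
          rw [eq_comm] at hst
          obtain ⟨b, hb, rfl⟩ := hs
          obtain ⟨i, rfl⟩ := ht
          apply Ideal.subset_span
          refine ⟨b + Finsupp.single i 1, ?_, ?_⟩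
          · simp only [Finsupp.add_apply, Finset.sum_add_distrib, hb, Finsupp.single_apply]
            simp
          · subst hst
            have hX : (MvPowerSeries.X i : MvPowerSeries (Fin d) ℤ_[p])
                = MvPowerSeries.monomial (Finsupp.single i 1) 1 := by
              rw [← MvPowerSeries.X_pow_eq i 1, pow_one]
            rw [hX, MvPowerSeries.monomial_mul_monomial, one_mul]

lemma monomial_smul_mem_range (m : ℕ) (hm : 1 ≤ m) (hd : 1 ≤ d)
    {μ : MvPowerSeries (Fin d) ℤ_[p]} (hμ : μ ∈ Mset d p (d * m)) (x : X) :
    μ • x ∈ LinearMap.range (gmap d p X m) := by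
  obtain ⟨b, hb, rfl⟩ := hμ
  have hpig : ∃ i, m ≤ b i := by
    by_contra h
    push_neg at h
    have hle : (∑ i, b i) ≤ ∑ _i : Fin d, (m - 1) :=
      Finset.sum_le_sum fun i _ => by have := h i; omega
    simp only [Finset.sum_const, Finset.card_univ, Fintype.card_fin, smul_eq_mul] at hle
    rw [hb] at hle
    have := Nat.le_of_mul_le_mul_left hle (by omega : 0 < d)
    omega
  obtain ⟨i, hi⟩ := hpig
  have hble : Finsupp.single i m ≤ b := by
    rw [Finsupp.single_le_iff]; exact hi
  have hsplit : (MvPowerSeries.monomial b 1 : MvPowerSeries (Fin d) ℤ_[p]) =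
      (MvPowerSeries.X i ^ m) * MvPowerSeries.monomial (b - Finsupp.single i m) 1 := by
    rw [MvPowerSeries.X_pow_eq, MvPowerSeries.monomial_mul_monomial, one_mul,
      add_tsub_cancel_of_le hble]
  rw [hsplit, mul_smul]
  exact ⟨Pi.single i ((MvPowerSeries.monomial (b - Finsupp.single i m) 1) • x),
    gmap_single m i _⟩

lemma span_smul_le_range (m : ℕ) (hm : 1 ≤ m) (hd : 1 ≤ d) :
    (Ideal.span (Mset d p (d * m))) • (⊤ : Submodule (MvPowerSeries (Fin d) ℤ_[p]) X) ≤
      LinearMap.range (gmap d p X m) := by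
  rw [Submodule.smul_le]
  intro r hr x _
  induction hr using Submodule.span_induction with
  | mem μ hμ => exact monomial_smul_mem_range m hm hd hμ x
  | zero => simp
  | add a b _ _ ha hb => rw [add_smul]; exact add_mem ha hb
  | smul c a _ ha =>
    rw [smul_eq_mul, mul_smul]
    exact Submodule.smul_mem _ c ha

lemma ideal_smul_top_eq_range :
    (Ideal.span (Set.range (MvPowerSeries.X : Fin d → MvPowerSeries (Fin d) ℤ_[p]))) •
      (⊤ : Submodule (MvPowerSeries (Fin d) ℤ_[p]) X) = LinearMap.range (gmap d p X 1) := by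
  apply le_antisymm
  · rw [Submodule.smul_le]
    intro r hr x _
    induction hr using Submodule.span_induction with
    | mem μ hμ =>
      obtain ⟨i, rfl⟩ := hμ
      exact ⟨Pi.single i x, by rw [gmap_single, pow_one]⟩
    | zero => simp
    | add a b _ _ ha hb => rw [add_smul]; exact add_mem ha hb
    | smul c a _ ha => rw [smul_eq_mul, mul_smul]; exact Submodule.smul_mem _ c ha
  · rintro x ⟨w, rfl⟩
    rw [gmap_apply]
    apply sum_mem
    intro i _
    refine Submodule.smul_mem_smul ?_ trivial
    rw [pow_one]
    exact Ideal.subset_span ⟨i, rfl⟩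

lemma sup_pow_smul_eq_top (Y : Submodule (MvPowerSeries (Fin d) ℤ_[p]) X)
    (I : Ideal (MvPowerSeries (Fin d) ℤ_[p]))
    (h : Y ⊔ I • (⊤ : Submodule (MvPowerSeries (Fin d) ℤ_[p]) X) = ⊤) (n : ℕ) :
    Y ⊔ (I ^ (n + 1)) • (⊤ : Submodule (MvPowerSeries (Fin d) ℤ_[p]) X) = ⊤ := by
  induction n with
  | zero => rw [pow_one]; exact h
  | succ n ih =>
    apply le_antisymm le_top
    have h3 : (I ^ (n + 2)) • (⊤ : Submodule (MvPowerSeries (Fin d) ℤ_[p]) X) =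
        I • ((I ^ (n + 1)) • ⊤) := by rw [pow_succ', Submodule.mul_smul]
    have h2 : I • (⊤ : Submodule (MvPowerSeries (Fin d) ℤ_[p]) X) =
        I • Y ⊔ (I ^ (n + 2)) • (⊤ : Submodule (MvPowerSeries (Fin d) ℤ_[p]) X) := by
      conv_lhs => rw [← ih]
      rw [Submodule.smul_sup, h3]
    calc (⊤ : Submodule (MvPowerSeries (Fin d) ℤ_[p]) X) = Y ⊔ I • ⊤ := h.symm
      _ = Y ⊔ (I • Y ⊔ (I ^ (n + 2)) • ⊤) := by rw [h2]
      _ ≤ Y ⊔ (Y ⊔ (I ^ (n + 2)) • ⊤) :=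
          sup_le_sup_left (sup_le_sup_right Submodule.smul_le_right _) _
      _ = Y ⊔ (I ^ (n + 2)) • ⊤ := by rw [← sup_assoc, sup_idem]
end

/-- Balister–Howson style Nakayama lemma.
Let `Λ = ℤ_p[[T₁, …, T_d]]` (`d ≥ 1`) with its natural product topology, and
let `X` be a compact Hausdorff topological abelian group with a continuous
`Λ`-module structure.  If the quotient of `X` by the closed submodule
generated by `T₁X, …, T_dX` (the coinvariant quotient `X_H` for `H = ℤ_p^d`)
is a finitely generated `ℤ_p`-module, then `X` is a finitely generated
`Λ`-module. -/
theorem finite_over_iwasawaAlgebra_of_coinvariants_finite_over_Zp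
    (p : ℕ) [Fact p.Prime] (d : ℕ) (hd : 1 ≤ d)
    (X : Type) [AddCommGroup X] [TopologicalSpace X] [IsTopologicalAddGroup X]
    [CompactSpace X] [T2Space X]
    [Module (MvPowerSeries (Fin d) ℤ_[p]) X]
    [ContinuousSMul (MvPowerSeries (Fin d) ℤ_[p]) X]
    [Module ℤ_[p] X] [IsScalarTower ℤ_[p] (MvPowerSeries (Fin d) ℤ_[p]) X]
    (hQ : Module.Finite ℤ_[p]
      (X ⧸ (Ideal.span
          (Set.range (MvPowerSeries.X : Fin d → MvPowerSeries (Fin d) ℤ_[p])) •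
        (⊤ : Submodule (MvPowerSeries (Fin d) ℤ_[p]) X)).topologicalClosure)) :
    Module.Finite (MvPowerSeries (Fin d) ℤ_[p]) X := by
  classical
  set I : Ideal (MvPowerSeries (Fin d) ℤ_[p]) :=
    Ideal.span (Set.range (MvPowerSeries.X : Fin d → MvPowerSeries (Fin d) ℤ_[p])) with hIdef
  -- continuity and closedness of the maps `gmap`
  have hgcont : ∀ m : ℕ, Continuous (gmap d p X m) := by
    intro m
    have he : ⇑(gmap d p X m)
        = fun w : Fin d → X =>
            ∑ i : Fin d, (MvPowerSeries.X i ^ m : MvPowerSeries (Fin d) ℤ_[p]) • w i := by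
      funext w; rw [gmap_apply]
    rw [he]
    exact continuous_finset_sum _ fun i _ => continuous_const.smul (continuous_apply i)
  have hrange_closed : ∀ m : ℕ,
      IsClosed ((LinearMap.range (gmap d p X m) : Submodule (MvPowerSeries (Fin d) ℤ_[p]) X)
        : Set X) := by
    intro m
    have h1 : ((LinearMap.range (gmap d p X m) : Submodule (MvPowerSeries (Fin d) ℤ_[p]) X)
        : Set X) = Set.range (gmap d p X m) := rfl
    rw [h1, ← Set.image_univ]
    exact (isCompact_univ.image (hgcont m)).isClosed
  have hStc : (I • ⊤ : Submodule (MvPowerSeries (Fin d) ℤ_[p]) X).topologicalClosure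
      = I • ⊤ := by
    apply SetLike.coe_injective
    rw [Submodule.topologicalClosure_coe]
    have h1 : ((I • ⊤ : Submodule (MvPowerSeries (Fin d) ℤ_[p]) X) : Set X)
        = ((LinearMap.range (gmap d p X 1) : Submodule (MvPowerSeries (Fin d) ℤ_[p]) X)
          : Set X) := by
      rw [hIdef, ideal_smul_top_eq_range]
    rw [h1]
    exact (hrange_closed 1).closure_eq
  set N : Submodule (MvPowerSeries (Fin d) ℤ_[p]) X := I • ⊤ with hNdef
  rw [hStc] at hQ
  obtain ⟨s, hs⟩ := hQ.fg_top
  have hmkQ := N.mkQ_surjective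
  set ℓ : (X ⧸ N) → X := Function.surjInv hmkQ with hldef
  have hℓ : ∀ q, N.mkQ (ℓ q) = q := fun q => Function.surjInv_eq hmkQ q
  set t : Finset X := s.image ℓ with htdef
  set Y : Submodule (MvPowerSeries (Fin d) ℤ_[p]) X
    := Submodule.span (MvPowerSeries (Fin d) ℤ_[p]) (t : Set X) with hYdef
  have hYclosed : IsClosed (Y : Set X) := by
    have h1 : Set.range (fun i : t => (i : X)) = (t : Set X) := Subtype.range_coe
    have h2 := aux_span_closed (R := MvPowerSeries (Fin d) ℤ_[p]) (fun i : t => (i : X))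
    rw [h1] at h2
    exact h2
  have hYS : Y ⊔ N = ⊤ := by
    rw [eq_top_iff]
    intro x _
    have hx : N.mkQ x ∈ Submodule.span ℤ_[p] (s : Set (X ⧸ N)) := by rw [hs]; trivial
    obtain ⟨f, -, hf⟩ := Submodule.mem_span_finset.mp hx
    have key : N.mkQ (∑ q ∈ s, f q • ℓ q) = N.mkQ x := by
      rw [map_sum]
      have h1 : ∀ q ∈ s, N.mkQ (f q • ℓ q) = f q • q := by
        intro q hq
        calc N.mkQ (f q • ℓ q) = f q • N.mkQ (ℓ q) :=
              Submodule.Quotient.mk_smul N (f q) (ℓ q)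
          _ = f q • q := by rw [hℓ]
      rw [Finset.sum_congr rfl h1, hf]
    have hker : x - ∑ q ∈ s, f q • ℓ q ∈ N := by
      have hz : N.mkQ (x - ∑ q ∈ s, f q • ℓ q) = 0 := by
        rw [map_sub, key, sub_self]
      exact (Submodule.Quotient.mk_eq_zero N).mp hz
    have hsum : (∑ q ∈ s, f q • ℓ q) ∈ Y := by
      apply sum_mem
      intro q hq
      have hmem : ℓ q ∈ (t : Set X) := by
        rw [htdef]
        exact Finset.mem_coe.mpr (Finset.mem_image_of_mem ℓ hq)
      rw [← algebraMap_smul (MvPowerSeries (Fin d) ℤ_[p]) (f q) (ℓ q)]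
      exact Y.smul_mem _ (Submodule.subset_span hmem)
    rw [Submodule.mem_sup]
    exact ⟨_, hsum, _, hker, by abel⟩
  -- surjectivity of `y + gmap m w`
  have hgsurj : ∀ m : ℕ, 1 ≤ m → ∀ x : X,
      ∃ y ∈ Y, ∃ w : Fin d → X, y + gmap d p X m w = x := by
    intro m hm x
    have hdm : d * m = (d * m - 1) + 1 := by
      have h1 : 1 ≤ d * m := Nat.one_le_iff_ne_zero.mpr (by
        intro h; rcases Nat.mul_eq_zero.mp h with h | h <;> omega)
      omega
    have h1 : Y ⊔ (I ^ (d * m)) • (⊤ : Submodule (MvPowerSeries (Fin d) ℤ_[p]) X) = ⊤ := by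
      rw [hdm]
      exact sup_pow_smul_eq_top Y I hYS _
    have h2 : (I ^ (d * m)) • (⊤ : Submodule (MvPowerSeries (Fin d) ℤ_[p]) X)
        ≤ LinearMap.range (gmap d p X m) :=
      le_trans (Submodule.smul_mono_left (pow_le_span_monomials (d * m)))
        (span_smul_le_range m hm hd)
    have hx : x ∈ Y ⊔ LinearMap.range (gmap d p X m) := by
      have hxt : x ∈ (⊤ : Submodule (MvPowerSeries (Fin d) ℤ_[p]) X) := trivial
      rw [← h1] at hxt
      exact (sup_le_sup_left h2 Y) hxt
    obtain ⟨y, hy, z, hz, hyz⟩ := Submodule.mem_sup.mp hx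
    obtain ⟨w, rfl⟩ := hz
    exact ⟨y, hy, w, hyz⟩
  -- Final step: `Y` is everything, by a Baire category argument.
  have hYtop : Y = ⊤ := by
    rw [eq_top_iff]
    intro x _
    have hxcl : x ∈ closure (Y : Set X) → x ∈ Y := by
      rw [hYclosed.closure_eq]; exact id
    apply hxcl
    rw [mem_closure_iff_nhds]
    intro T hT
    have hcontsub : Continuous fun w : X => x - w := continuous_const.sub continuous_id
    have hW : (fun w : X => x - w) ⁻¹' T ∈ nhds (0 : X) := by
      refine hcontsub.continuousAt.preimage_mem_nhds ?_
      simpa using hT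
    obtain ⟨W₂, hW₂, hW₂add⟩ := exists_nhds_zero_half hW
    obtain ⟨V, hV, hVsum⟩ := aux_sum_small d hW₂
    obtain ⟨U, hU, hUclosed, hUV⟩ := exists_mem_nhds_isClosed_subset hV
    set E : ℕ → Set X := fun N => {z | ∀ i : Fin d, ∀ k : ℕ, N ≤ k →
      (MvPowerSeries.X i ^ k : MvPowerSeries (Fin d) ℤ_[p]) • z ∈ U} with hEdef
    have hEclosed : ∀ N, IsClosed (E N) := by
      intro N
      have h1 : E N = ⋂ i : Fin d, ⋂ k : ℕ, ⋂ _h : N ≤ k,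
          ((fun z : X => (MvPowerSeries.X i ^ k : MvPowerSeries (Fin d) ℤ_[p]) • z) ⁻¹' U) := by
        ext z
        simp only [hEdef, Set.mem_iInter, Set.mem_preimage, Set.mem_setOf_eq]
      rw [h1]
      exact isClosed_iInter fun i => isClosed_iInter fun k => isClosed_iInter fun _ =>
        hUclosed.preimage (continuous_const_smul _)
    have hEcover : (⋃ N, E N) = Set.univ := by
      rw [Set.eq_univ_iff_forall]
      intro z
      have hev : ∀ᶠ k : ℕ in atTop, ∀ i : Fin d,
          (MvPowerSeries.X i ^ k : MvPowerSeries (Fin d) ℤ_[p]) • z ∈ U := by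
        rw [Filter.eventually_all]
        intro i
        have htd : Tendsto (fun k : ℕ =>
            (MvPowerSeries.X i ^ k : MvPowerSeries (Fin d) ℤ_[p]) • z) atTop (nhds 0) := by
          have h2 := (aux_X_pow_tendsto ℤ_[p] i).smul (tendsto_const_nhds (x := z))
          simpa using h2
        exact htd.eventually_mem hU
      obtain ⟨N, hN⟩ := Filter.eventually_atTop.mp hev
      exact Set.mem_iUnion.mpr ⟨N, fun i k hk => hN k hk i⟩
    obtain ⟨N₀, z₀, hz₀⟩ := nonempty_interior_of_iUnion_of_closed hEclosed hEcover
    set O : X → Set X := fun c => {z | z - c + z₀ ∈ interior (E N₀)} with hOdef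
    have hOopen : ∀ c, IsOpen (O c) := fun c =>
      isOpen_interior.preimage ((continuous_id.sub continuous_const).add continuous_const)
    have hOcover : Set.univ ⊆ ⋃ c, O c := by
      intro z _
      refine Set.mem_iUnion.mpr ⟨z, ?_⟩
      simp only [hOdef, Set.mem_setOf_eq, sub_self, zero_add]
      exact hz₀
    obtain ⟨F, hF⟩ := isCompact_univ.elim_finite_subcover O hOopen hOcover
    have hsel : ∀ᶠ k : ℕ in atTop,
        (∀ c ∈ (F : Set X), ∀ i : Fin d,
          (MvPowerSeries.X i ^ k : MvPowerSeries (Fin d) ℤ_[p]) • (c - z₀) ∈ U)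
        ∧ 1 ≤ k ∧ N₀ ≤ k := by
      refine Filter.Eventually.and ?_
        (Filter.Eventually.and (eventually_ge_atTop 1) (eventually_ge_atTop N₀))
      rw [Filter.eventually_all_finite F.finite_toSet]
      intro c _
      rw [Filter.eventually_all]
      intro i
      have htd := (aux_X_pow_tendsto ℤ_[p] i).smul (tendsto_const_nhds (x := c - z₀))
      simp only [zero_smul] at htd
      exact htd.eventually_mem hU
    obtain ⟨m, hmF, hm1, hmN₀⟩ := hsel.exists
    obtain ⟨y, hy, w, hyw⟩ := hgsurj m hm1 x
    have hwi : ∀ i : Fin d, ∃ c, c ∈ (F : Set X) ∧ w i - c + z₀ ∈ E N₀ := by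
      intro i
      have h2 := hF (Set.mem_univ (w i))
      rw [Set.mem_iUnion₂] at h2
      obtain ⟨c, hcF, hc⟩ := h2
      exact ⟨c, hcF, interior_subset hc⟩
    choose c hcF hcE using hwi
    have hdecomp : gmap d p X m w =
        (∑ i : Fin d, (MvPowerSeries.X i ^ m : MvPowerSeries (Fin d) ℤ_[p]) • (w i - c i + z₀))
        + (∑ i : Fin d, (MvPowerSeries.X i ^ m : MvPowerSeries (Fin d) ℤ_[p]) • (c i - z₀)) := by
      rw [gmap_apply, ← Finset.sum_add_distrib]
      refine Finset.sum_congr rfl fun i _ => ?_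
      rw [← smul_add]
      congr 1
      abel
    have hs1 : (∑ i : Fin d, (MvPowerSeries.X i ^ m : MvPowerSeries (Fin d) ℤ_[p]) •
        (w i - c i + z₀)) ∈ W₂ :=
      hVsum _ fun i => hUV (hcE i i m hmN₀)
    have hs2 : (∑ i : Fin d, (MvPowerSeries.X i ^ m : MvPowerSeries (Fin d) ℤ_[p]) •
        (c i - z₀)) ∈ W₂ :=
      hVsum _ fun i => hUV (hmF (c i) (hcF i) i)
    have hfinal : gmap d p X m w ∈ (fun w : X => x - w) ⁻¹' T := by
      rw [hdecomp]
      exact hW₂add _ hs1 _ hs2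
    have hxy : x - gmap d p X m w = y := by
      rw [← hyw]; abel
    refine ⟨y, ?_, hy⟩
    rw [← hxy]
    exact hfinal
  exact ⟨⟨t, hYdef ▸ hYtop⟩⟩
end

section
/- Let p be a prime and let k be an algebraic closure of the field 𝔽_p with p elements. For every Witt vector x ∈ 𝕎(k) and every natural number n, there exists a finite subfield k₀ ⊆ k and an element y ∈ 𝕎(k₀) such that x − 𝕎(ι)(y) ∈ p^n 𝕎(k), where 𝕎(ι) : 𝕎(k₀) → 𝕎(k) is the ring homomorphism induced by the inclusion ι : k₀ ↪ k. In other words, the union of the images of 𝕎(k₀) over all finite subfields k₀ of k is dense in 𝕎(k) for the p-adic topology, so that 𝕎(k) is the p-adic completion of the colimit of the rings 𝕎(k₀). -/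
open WittVector

private lemma iterate_verschiebung_coeff_eq_zero {p : ℕ} [hp : Fact p.Prime]
    {k : Type*} [CommRing k] (n : ℕ) :
    ∀ (j : ℕ), j < n → ∀ (x : WittVector p k),
      (WittVector.verschiebung^[n] x).coeff j = 0 := by
  induction n with
  | zero => intro j hj; omega
  | succ m ih =>
    intro j hj x
    rw [Function.iterate_succ_apply']
    cases j with
    | zero => exact WittVector.verschiebung_coeff_zero _
    | succ i =>
      rw [WittVector.verschiebung_coeff_succ]
      exact ih i (by omega) x

private lemma exists_pow_p_mul_of_coeff_eq_zero {p : ℕ} [hp : Fact p.Prime]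
    {k : Type*} [CommRing k] [CharP k p] [PerfectRing k p]
    (a : WittVector p k) (n : ℕ) (h : ∀ i < n, a.coeff i = 0) :
    ∃ z : WittVector p k, a = (p : WittVector p k) ^ n * z := by
  obtain ⟨b, hb⟩ := (WittVector.frobenius_bijective p k).surjective.iterate n
    (WittVector.mk p fun i => a.coeff (i + n))
  refine ⟨b, ?_⟩
  have key : ∀ (m : ℕ) (x : WittVector p k),
      WittVector.verschiebung^[m] (WittVector.frobenius^[m] x)
        = x * (p : WittVector p k) ^ m := by
    intro m
    induction m with
    | zero => intro x; simp
    | succ i ih =>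
      intro x
      have hcomm := Function.Commute.comp_iterate
        (WittVector.verschiebung_frobenius_comm (p := p) (R := k))
      have e1 : WittVector.verschiebung^[i+1] (WittVector.frobenius^[i+1] x)
          = ((WittVector.verschiebung ∘ WittVector.frobenius)^[i+1]) x := by
        rw [hcomm (i+1)]; rfl
      have e2 : WittVector.verschiebung^[i] (WittVector.frobenius^[i] x)
          = ((WittVector.verschiebung ∘ WittVector.frobenius)^[i]) x := by
        rw [hcomm i]; rfl
      rw [e1, Function.iterate_succ_apply', ← e2, ih, Function.comp_apply,
        WittVector.verschiebung_frobenius, pow_succ, mul_assoc]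
  have ha : WittVector.verschiebung^[n] (WittVector.mk p fun i => a.coeff (i + n)) = a := by
    ext j
    rcases lt_or_ge j n with hj | hj
    · rw [iterate_verschiebung_coeff_eq_zero n j hj, h j hj]
    · obtain ⟨i, rfl⟩ : ∃ i, j = i + n := ⟨j - n, by omega⟩
      rw [WittVector.iterate_verschiebung_coeff, WittVector.coeff_mk]
  rw [← ha, ← hb, key, mul_comm]

/-- Let `k = 𝔽̄_p`.  For every Witt vector `x ∈ 𝕎(k)` and every `n : ℕ` there is a
finite subfield `k₀ ⊆ k` and `y ∈ 𝕎(k₀)` with `x - 𝕎(ι)(y) ∈ pⁿ𝕎(k)`; i.e.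
the union of the images of the `𝕎(k₀)` over finite subfields `k₀` is `p`-adically
dense in `𝕎(k)`, so `𝕎(k)` is the `p`-adic completion of `colim 𝕎(k₀)`. -/
theorem wittVector_dense_image_of_finite_subfields
    (p : ℕ) [Fact p.Prime]
    (x : WittVector p (AlgebraicClosure (ZMod p))) (n : ℕ) :
    ∃ k₀ : Subfield (AlgebraicClosure (ZMod p)), Finite k₀ ∧
      ∃ y : WittVector p k₀, ∃ z : WittVector p (AlgebraicClosure (ZMod p)),
        x - WittVector.map k₀.subtype y =
          (p : WittVector p (AlgebraicClosure (ZMod p))) ^ n * z := by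
  classical
  set S : Set (AlgebraicClosure (ZMod p)) := (fun i => x.coeff i) '' (Set.Iio n) with hS
  have hSfin : S.Finite := (Set.finite_Iio n).image _
  have : Finite S := hSfin
  have hint : ∀ a ∈ S, IsIntegral (ZMod p) a := fun a _ =>
    Algebra.IsIntegral.isIntegral a
  let K : IntermediateField (ZMod p) (AlgebraicClosure (ZMod p)) := IntermediateField.adjoin (ZMod p) S
  have : FiniteDimensional (ZMod p) K :=
    IntermediateField.finiteDimensional_adjoin hint
  have hKfin : Finite K := Module.finite_of_finite (ZMod p)
  refine ⟨K.toSubfield, ?_, ?_⟩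
  · exact Finite.of_injective (fun a => (⟨a.1, a.2⟩ : K)) (fun a b hab => by
      cases a; cases b; simpa using hab)
  · have hmem : ∀ i < n, x.coeff i ∈ K.toSubfield := fun i hi =>
      IntermediateField.subset_adjoin (ZMod p) S ⟨i, hi, rfl⟩
    let y : WittVector p K.toSubfield :=
      WittVector.mk p (fun i => if h : i < n then ⟨x.coeff i, hmem i h⟩ else 0)
    have hcoeff : ∀ i < n, (x - WittVector.map K.toSubfield.subtype y).coeff i = 0 := by
      intro i hi
      have h1 : (WittVector.map K.toSubfield.subtype y).coeff i = x.coeff i := by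
        rw [WittVector.map_coeff]
        simp only [y, WittVector.coeff_mk, dif_pos hi]
        rfl
      have := WittVector.mem_ker_truncate (p := p) (n := n)
        (x - WittVector.map K.toSubfield.subtype y)
      rw [RingHom.mem_ker, map_sub, sub_eq_zero] at this
      refine this.mp ?_ i hi
      ext j
      rw [WittVector.coeff_truncate, WittVector.coeff_truncate, WittVector.map_coeff]
      simp only [y, WittVector.coeff_mk, dif_pos j.2]
      rfl
    obtain ⟨z, hz⟩ := exists_pow_p_mul_of_coeff_eq_zero
      (x - WittVector.map K.toSubfield.subtype y) n hcoeff
    exact ⟨y, z, hz⟩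
end
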